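/- Let F be a family of non-decreasing functions [0,∞) → [0,∞) and let X be a 1-uniformly discrete metric space. Then: (a) asdim_F(X) ≤ n if and only if for every R > 0 there is a cover 𝒰 of X with R-multiplicity at most n + 1, such that every element of 𝒰 is 2R-connected and 𝒰 is F-growing; (b) ov-asdim_F(X) ≤ n if and only if for every R > 0 there is a cover 𝒰 of X with R-multiplicity at most n + 1, such that every element of 𝒰 is 2R-connected and for every s ≥ 1 and m ≥ 0 the collection {N^m_s(U) : U ∈ 𝒰} is F-growing. -/

import Mathlib

open Metric Set

/-- A metric space is 1-uniformly discrete. -/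
def UnifDiscrete (X : Type*) [MetricSpace X] : Prop :=
  ∀ x y : X, x ≠ y → 1 ≤ dist x y

/-- Bounded geometry: balls of each radius have uniformly bounded cardinality. -/
def BddGeom (X : Type*) [MetricSpace X] : Prop :=
  ∀ R : ℝ, ∃ N : ℕ, ∀ (x : X) (s : Finset X), ↑s ⊆ Metric.closedBall x R → s.card ≤ N

/-- A regular map between metric spaces. -/
def IsRegularMap {X Y : Type*} [MetricSpace X] [MetricSpace Y] (f : X → Y) : Prop :=
  ∃ κ : ℕ, 1 ≤ κ ∧ (∀ x x' : X, dist (f x) (f x') ≤ κ * (1 + dist x x')) ∧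
    ∀ y : Y, ∃ c : Finset X, c.card ≤ κ ∧ f ⁻¹' Metric.ball y 1 ⊆ ⋃ x ∈ c, Metric.ball x 1

/-- A quasi-isometric embedding. -/
def IsQIEmbedding {X Y : Type*} [MetricSpace X] [MetricSpace Y] (f : X → Y) : Prop :=
  ∃ L D : ℝ, 1 ≤ L ∧ 0 ≤ D ∧ ∀ x x' : X,
    L⁻¹ * dist x x' - D ≤ dist (f x) (f x') ∧ dist (f x) (f x') ≤ L * dist x x' + D

/-- A coarse Lipschitz map. -/
def CoarseLipschitz {X Y : Type*} [MetricSpace X] [MetricSpace Y] (f : X → Y) : Prop :=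
  ∃ K : ℝ, 1 ≤ K ∧ ∀ x x' : X, dist (f x) (f x') ≤ K * dist x x' + K

/-- The metric of `T` is the graph metric of a 3-regular tree. -/
def IsCubicTreeMetric (T : Type*) [MetricSpace T] : Prop :=
  ∃ G : SimpleGraph T, G.Connected ∧ G.IsAcyclic ∧
    (∀ v : T, (G.neighborSet v).ncard = 3) ∧
    ∀ u v : T, dist u v = (G.dist u v : ℝ)

/-- The metric of `Z` is the graph metric of a connected graph of uniformly bounded degree. -/
def IsBddDegGraphMetric (Z : Type*) [MetricSpace Z] : Prop :=
  ∃ G : SimpleGraph Z, G.Connected ∧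
    (∃ D : ℕ, ∀ v : Z, (G.neighborSet v).ncard ≤ D) ∧
    ∀ u v : Z, dist u v = (G.dist u v : ℝ)

/-- A non-decreasing subexponential function `[0,∞) → [0,∞)`. -/
def SubexpFun (g : ℝ → ℝ) : Prop :=
  MonotoneOn g (Set.Ici 0) ∧ (∀ r : ℝ, 0 ≤ g r) ∧
    Filter.Tendsto (fun r => Real.log (g r) / r) Filter.atTop (nhds 0)

/-- Every ball of radius `r` in `Z` contains at most `g r` points. -/
def HasGrowthBound (Z : Type*) [MetricSpace Z] (g : ℝ → ℝ) : Prop :=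
  ∀ (z : Z) (r : ℝ), 0 ≤ r → ∀ s : Finset Z, ↑s ⊆ Metric.closedBall z r → (s.card : ℝ) ≤ g r

def HasSubexpGrowth (Z : Type*) [MetricSpace Z] : Prop :=
  ∃ g : ℝ → ℝ, SubexpFun g ∧ HasGrowthBound Z g

def HasPolyGrowth (Z : Type*) [MetricSpace Z] : Prop :=
  ∃ (C : ℝ) (d : ℕ), 1 ≤ C ∧ HasGrowthBound Z (fun r => C * r ^ d + C)

/-- Distinct members of the family are at distance at least `r` from each other. -/
def SepFamily {X : Type*} [MetricSpace X] (r : ℝ) (𝒰 : Set (Set X)) : Prop :=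
  ∀ U ∈ 𝒰, ∀ V ∈ 𝒰, U ≠ V → ∀ x ∈ U, ∀ y ∈ V, r ≤ dist x y

/-- A decomposition of `X` into `n+1` colours of `r`-separated pieces. -/
def Decomp {X : Type*} [MetricSpace X] (n : ℕ) (r : ℝ) (𝒰 : Fin (n+1) → Set (Set X)) : Prop :=
  (∀ x : X, ∃ i, ∃ U ∈ 𝒰 i, x ∈ U) ∧ ∀ i, SepFamily r (𝒰 i)

/-- A collection of subsets of `X` has growth uniformly controlled by the family `F`. -/
def FGrowing {X : Type*} [MetricSpace X] (F : Set (ℝ → ℝ)) (𝒰 : Set (Set X)) : Prop :=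
  ∃ f ∈ F, ∃ C : ℝ, 1 ≤ C ∧ ∀ U ∈ 𝒰, ∀ (x : X) (r : ℝ), 0 ≤ r →
    ∀ s : Finset X, ↑s ⊆ U ∩ Metric.closedBall x r → (s.card : ℝ) ≤ C * f (C * r) + C

/-- `asdim_F X ≤ n`. -/
def AsdimLE (F : Set (ℝ → ℝ)) (X : Type*) [MetricSpace X] (n : ℕ) : Prop :=
  ∀ r : ℝ, 0 < r → ∃ 𝒰 : Fin (n+1) → Set (Set X),
    Decomp n r 𝒰 ∧ FGrowing F (⋃ i, 𝒰 i)

/-- Iterated neighbourhoods `N^m_s(Y)` of `Y` with respect to the collection `𝒴`. -/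
def iterNbhd {X : Type*} [MetricSpace X] (𝒴 : Set (Set X)) (s : ℝ) : ℕ → Set X → Set X
  | 0, Y => Y
  | m + 1, Y => ⋃₀ {Y' | Y' ∈ 𝒴 ∧ ∃ x ∈ Y', ∃ z ∈ iterNbhd 𝒴 s m Y, dist x z ≤ s}

/-- `ov-asdim_F X ≤ n`. -/
def OvAsdimLE (F : Set (ℝ → ℝ)) (X : Type*) [MetricSpace X] (n : ℕ) : Prop :=
  ∀ r : ℝ, 0 < r → ∃ 𝒰 : Fin (n+1) → Set (Set X),
    Decomp n r 𝒰 ∧ ∀ s : ℝ, 1 ≤ s → ∀ m : ℕ,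
      FGrowing F ((iterNbhd (⋃ i, 𝒰 i) s m) '' (⋃ i, 𝒰 i))

/-- A family of non-decreasing functions `[0,∞) → [0,∞)`. -/
def NondecrFamily (F : Set (ℝ → ℝ)) : Prop :=
  ∀ f ∈ F, MonotoneOn f (Set.Ici 0) ∧ ∀ r : ℝ, 0 ≤ r → 0 ≤ f r

/-- The family of non-decreasing subexponential functions. -/
def seFamily : Set (ℝ → ℝ) := {g | SubexpFun g}

/-- The family of non-decreasing functions bounded by `C·r^d + C`. -/
def polyFamily (d : ℕ) : Set (ℝ → ℝ) :=
  {f | MonotoneOn f (Set.Ici 0) ∧ (∀ r : ℝ, 0 ≤ f r) ∧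
    ∃ C : ℝ, 0 < C ∧ ∀ r : ℝ, 0 ≤ r → f r ≤ C * r ^ d + C}

/-- `asdim X ≤ n` : classical asymptotic dimension. -/
def ClassicalAsdimLE (X : Type*) [MetricSpace X] (n : ℕ) : Prop :=
  ∀ r : ℝ, 0 < r → ∃ 𝒰 : Fin (n+1) → Set (Set X), Decomp n r 𝒰 ∧
    ∃ B : ℝ, ∀ U ∈ ⋃ i, 𝒰 i, ∀ x ∈ U, ∀ y ∈ U, dist x y ≤ B

/-- `𝒰` has `R`-multiplicity at most `k`: every closed ball of radius `R` meets at most `k`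
members of `𝒰`. -/
def RMultLE {X : Type*} [MetricSpace X] (𝒰 : Set (Set X)) (R : ℝ) (k : ℕ) : Prop :=
  ∀ x : X, ∀ t : Finset (Set X), ↑t ⊆ 𝒰 →
    (∀ U ∈ t, (U ∩ Metric.closedBall x R).Nonempty) → t.card ≤ k

/-- `U` is `ρ`-connected. -/
def RConn {X : Type*} [MetricSpace X] (ρ : ℝ) (U : Set X) : Prop :=
  ∀ x ∈ U, ∀ y ∈ U, ∃ (m : ℕ) (c : ℕ → X), c 0 = x ∧ c m = y ∧
    (∀ i ≤ m, c i ∈ U) ∧ ∀ i < m, dist (c i) (c (i + 1)) ≤ ρ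

section Aux
variable {X : Type*} [MetricSpace X]

open Classical in
/-- If every member of `𝒱` is covered by at most `k+1` members of an `F`-growing
collection `𝒲`, then `𝒱` is `F`-growing. -/
lemma FGrowing.of_unions {F : Set (ℝ → ℝ)} (hF : NondecrFamily F) (k : ℕ)
    {𝒲 𝒱 : Set (Set X)} (hW : FGrowing F 𝒲)
    (h : ∀ V ∈ 𝒱, ∃ σ : Finset (Set X), ↑σ ⊆ 𝒲 ∧ σ.card ≤ k + 1 ∧ V ⊆ ⋃ U ∈ σ, (U : Set X)) :
    FGrowing F 𝒱 := by
  obtain ⟨f, hfF, C, hC1, hbound⟩ := hW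
  refine ⟨f, hfF, (k+1) * C, ?_, ?_⟩
  · have hk : (0:ℝ) ≤ (k:ℝ) := Nat.cast_nonneg k
    nlinarith [hC1]
  intro V hV x r hr s hs
  obtain ⟨σ, hσW, hσcard, hσcov⟩ := h V hV
  set B := C * f (C * r) + C with hB
  have hfCr : 0 ≤ f (C * r) := (hF f hfF).2 _ (by positivity)
  have hB0 : 0 ≤ B := by positivity
  have hsub : s ⊆ σ.biUnion (fun U => s.filter (· ∈ U)) := by
    intro a ha
    have haV : a ∈ V := (hs ha).1
    have := hσcov haV
    simp only [Set.mem_iUnion] at this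
    obtain ⟨U, hU, haU⟩ := this
    exact Finset.mem_biUnion.2 ⟨U, hU, Finset.mem_filter.2 ⟨ha, haU⟩⟩
  have hcard : (s.card : ℝ) ≤ (σ.card : ℝ) * B := by
    have h1 : s.card ≤ ∑ U ∈ σ, (s.filter (· ∈ U)).card :=
      le_trans (Finset.card_le_card hsub) Finset.card_biUnion_le
    have h2 : (∑ U ∈ σ, ((s.filter (· ∈ U)).card : ℝ)) ≤ (σ.card : ℝ) * B := by
      have := Finset.sum_le_card_nsmul σ (fun U => ((s.filter (· ∈ U)).card : ℝ)) B ?_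
      · simpa [nsmul_eq_mul] using this
      · intro U hU
        refine hbound U (hσW hU) x r hr _ ?_
        intro a ha
        have ha' := Finset.mem_filter.1 ha
        exact ⟨ha'.2, (hs ha'.1).2⟩
    calc (s.card : ℝ) ≤ (∑ U ∈ σ, (s.filter (· ∈ U)).card : ℕ) := by exact_mod_cast h1
      _ = ∑ U ∈ σ, ((s.filter (· ∈ U)).card : ℝ) := by push_cast; ring
      _ ≤ (σ.card : ℝ) * B := h2
  have hσk : (σ.card : ℝ) ≤ (k+1 : ℝ) := by exact_mod_cast hσcard
  have hC0 : (0:ℝ) ≤ C := le_trans zero_le_one hC1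
  have hk : (0:ℝ) ≤ (k:ℝ) := Nat.cast_nonneg k
  have hkC : (0:ℝ) ≤ ((k:ℝ)+1) * C := mul_nonneg (by linarith) hC0
  have hmono : f (C * r) ≤ f (((k:ℝ)+1) * C * r) := by
    refine (hF f hfF).1 (mul_nonneg hC0 hr) (mul_nonneg hkC hr) ?_
    nlinarith [mul_nonneg (mul_nonneg hk hC0) hr]
  have hmul := mul_le_mul_of_nonneg_left hmono hkC
  calc (s.card : ℝ) ≤ (σ.card : ℝ) * B := hcard
    _ ≤ ((k:ℝ)+1) * B := by nlinarith
    _ = ((k:ℝ)+1) * C * f (C * r) + ((k:ℝ)+1) * C := by ring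
    _ ≤ ((k:ℝ)+1) * C * f (((k:ℝ)+1) * C * r) + ((k:ℝ)+1) * C := by nlinarith
    _ = (k+1) * C * f ((k+1) * C * r) + (k+1) * C := by push_cast; ring

end Aux

section Chains
variable {X : Type*} [MetricSpace X]

/-- One step of a `ρ`-chain inside `P`. -/
def StepRel (P : Set X) (ρ : ℝ) (a b : X) : Prop := a ∈ P ∧ b ∈ P ∧ dist a b ≤ ρ

lemma StepRel.symmetric (P : Set X) (ρ : ℝ) : Symmetric (StepRel P ρ) := by
  intro a b ⟨ha, hb, hd⟩; exact ⟨hb, ha, by rwa [dist_comm]⟩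

/-- The `ρ`-chain component of `x` in `P`. -/
def Comp (P : Set X) (ρ : ℝ) (x : X) : Set X :=
  {y | Relation.ReflTransGen (StepRel P ρ) x y}

lemma comp_subset {P : Set X} {ρ : ℝ} {x : X} (hx : x ∈ P) : Comp P ρ x ⊆ P := by
  intro y hy
  induction hy with
  | refl => exact hx
  | tail _ hstep _ => exact hstep.2.1

lemma rtg_symm {P : Set X} {ρ : ℝ} {a b : X}
    (h : Relation.ReflTransGen (StepRel P ρ) a b) :
    Relation.ReflTransGen (StepRel P ρ) b a :=
  by haveI : Std.Symm (StepRel P ρ) := ⟨fun _ _ hab => StepRel.symmetric P ρ hab⟩; exact Std.Symm.symm _ _ h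

lemma comp_eq_of_rtg {P : Set X} {ρ : ℝ} {x y : X}
    (h : Relation.ReflTransGen (StepRel P ρ) x y) : Comp P ρ x = Comp P ρ y := by
  ext z
  constructor
  · intro hz; exact (rtg_symm h).trans hz
  · intro hz; exact h.trans hz

lemma rtg_chain {P : Set X} {ρ : ℝ} {x y : X}
    (h : Relation.ReflTransGen (StepRel P ρ) x y) :
    ∃ m : ℕ, ∃ c : ℕ → X, c 0 = x ∧ c m = y ∧
      (∀ i ≤ m, Relation.ReflTransGen (StepRel P ρ) x (c i)) ∧
      ∀ i < m, dist (c i) (c (i+1)) ≤ ρ := by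
  induction h with
  | refl =>
    exact ⟨0, fun _ => x, rfl, rfl, fun i _ => Relation.ReflTransGen.refl, fun i hi => by omega⟩
  | @tail b z hxb hbz ih =>
    obtain ⟨m, c, h0, hm, hmem, hstep⟩ := ih
    refine ⟨m + 1, fun i => if i ≤ m then c i else z, ?_, ?_, ?_, ?_⟩
    · simp [h0]
    · simp
    · intro i hi
      by_cases hile : i ≤ m
      · simpa [hile] using hmem i hile
      · simpa [hile] using hxb.tail hbz
    · intro i hi
      by_cases hilt : i < m
      · have h1 : i ≤ m := le_of_lt hilt
        have h2 : i + 1 ≤ m := hilt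
        simpa [h1, h2] using hstep i hilt
      · have hieq : i = m := by omega
        subst hieq
        have h1 : i ≤ i := le_refl i
        have h2 : ¬ (i + 1 ≤ i) := by omega
        simpa [h1, h2, hm] using hbz.2.2

/-- Each chain component is `ρ`-connected. -/
lemma comp_rconn {P : Set X} {ρ : ℝ} {x₀ : X} (hx₀ : x₀ ∈ P) : RConn ρ (Comp P ρ x₀) := by
  intro x hx y hy
  have hxy : Relation.ReflTransGen (StepRel P ρ) x y := (rtg_symm hx).trans hy
  obtain ⟨m, c, h0, hm, hmem, hstep⟩ := rtg_chain hxy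
  exact ⟨m, c, h0, hm, fun i hi => hx.trans (hmem i hi), hstep⟩

end Chains

section Forward
variable {X : Type*} [MetricSpace X]

lemma forward_cover {n : ℕ} {R : ℝ} (hR : 0 < R)
    (𝒰fam : Fin (n+1) → Set (Set X)) (hdec : Decomp n (2*R+1) 𝒰fam) :
    ∃ 𝒰 : Set (Set X),
      (∀ x : X, ∃ U ∈ 𝒰, x ∈ U) ∧ RMultLE 𝒰 R (n+1) ∧ (∀ U ∈ 𝒰, RConn (2*R) U) ∧
      ∃ pick : Set X → Set X,
        (∀ W ∈ 𝒰, pick W ∈ ⋃ i, 𝒰fam i ∧ W ⊆ pick W) ∧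
        ∀ s : ℝ, ∀ m : ℕ, ∀ W ∈ 𝒰,
          iterNbhd 𝒰 s m W ⊆ iterNbhd (⋃ i, 𝒰fam i) s m (pick W) := by
  classical
  set 𝒴 : Set (Set X) := ⋃ i, 𝒰fam i with h𝒴
  set 𝒰 : Set (Set X) := {W | ∃ P ∈ 𝒴, ∃ x ∈ P, W = Comp P (2*R) x} with h𝒰
  have hch : ∀ W ∈ 𝒰, ∃ P, P ∈ 𝒴 ∧ ∃ x, x ∈ P ∧ W = Comp P (2*R) x := by
    intro W hW; obtain ⟨P, hP, x, hx, hWeq⟩ := hW; exact ⟨P, hP, x, hx, hWeq⟩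
  set pick : Set X → Set X := fun W => if h : W ∈ 𝒰 then (hch W h).choose else W with hpick
  have hpickP : ∀ W (hW : W ∈ 𝒰), pick W ∈ 𝒴 ∧ ∃ x, x ∈ pick W ∧ W = Comp (pick W) (2*R) x := by
    intro W hW
    simp only [hpick, dif_pos hW]
    exact (hch W hW).choose_spec
  have hsub : ∀ W (hW : W ∈ 𝒰), W ⊆ pick W := by
    intro W hW
    obtain ⟨_, x, hx, hWeq⟩ := hpickP W hW
    have h2 := comp_subset (ρ := 2*R) hx
    rwa [← hWeq] at h2
  refine ⟨𝒰, ?_, ?_, ?_, pick, ?_, ?_⟩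
  · -- cover
    intro x
    obtain ⟨i, P, hP, hx⟩ := hdec.1 x
    exact ⟨Comp P (2*R) x, ⟨P, mem_iUnion.2 ⟨i, hP⟩, x, hx, rfl⟩, Relation.ReflTransGen.refl⟩
  · -- multiplicity
    intro x t ht hmeets
    set col : Set X → Fin (n+1) := fun W =>
      if h : pick W ∈ 𝒴 then (mem_iUnion.1 h).choose else 0 with hcol
    have hcolP : ∀ W (hW : W ∈ 𝒰), pick W ∈ 𝒰fam (col W) := by
      intro W hW
      have h := (hpickP W hW).1
      simp only [hcol, dif_pos h]
      exact (mem_iUnion.1 h).choose_spec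
    have hinj : Set.InjOn col ↑t := by
      intro W hW W' hW' hcoleq
      by_contra hne
      have hWU : W ∈ 𝒰 := ht hW
      have hWU' : W' ∈ 𝒰 := ht hW'
      obtain ⟨w, hwW, hwB⟩ := hmeets W (by exact_mod_cast hW)
      obtain ⟨w', hwW', hwB'⟩ := hmeets W' (by exact_mod_cast hW')
      have hdist : dist w w' ≤ 2 * R := by
        have h1 : dist w x ≤ R := mem_closedBall.1 hwB
        have h2 : dist w' x ≤ R := mem_closedBall.1 hwB'
        calc dist w w' ≤ dist w x + dist x w' := dist_triangle _ _ _
          _ ≤ R + R := by rw [dist_comm x w']; linarith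
          _ = 2 * R := by ring
      obtain ⟨hPY, x₁, hx₁, hWeq⟩ := hpickP W hWU
      obtain ⟨hPY', x₂, hx₂, hWeq'⟩ := hpickP W' hWU'
      by_cases hPeq : pick W = pick W'
      · -- same piece: same component
        have hwP : w ∈ pick W := hsub W hWU hwW
        have hwP' : w' ∈ pick W := hPeq ▸ hsub W' hWU' hwW'
        have hstep : StepRel (pick W) (2*R) w w' := ⟨hwP, hwP', hdist⟩
        have h1 : Relation.ReflTransGen (StepRel (pick W) (2*R)) x₁ w := by
          have h := hwW; rw [hWeq] at h; exact h
        have h2 : Relation.ReflTransGen (StepRel (pick W) (2*R)) x₂ w' := by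
          have h := hwW'; rw [hWeq', ← hPeq] at h; exact h
        have hcc : Comp (pick W) (2*R) x₁ = Comp (pick W) (2*R) x₂ := by
          rw [comp_eq_of_rtg h1, comp_eq_of_rtg h2,
            comp_eq_of_rtg (Relation.ReflTransGen.single hstep)]
        refine hne ?_
        rw [hWeq, hWeq', ← hPeq, hcc]
      · -- different pieces of the same colour: separated
        have hsep := hdec.2 (col W) (pick W) (hcolP W hWU) (pick W')
          (hcoleq ▸ hcolP W' hWU') hPeq w (hsub W hWU hwW) w' (hsub W' hWU' hwW')
        linarith
    have := Finset.card_le_card_of_injOn col (fun a _ => Finset.mem_univ (col a)) hinj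
    simpa using this
  · -- connectedness
    intro W hW
    obtain ⟨_, x, hx, hWeq⟩ := hpickP W hW
    have h2 := comp_rconn (ρ := 2*R) hx
    rwa [← hWeq] at h2
  · intro W hW; exact ⟨(hpickP W hW).1, hsub W hW⟩
  · -- iterated neighbourhoods
    intro s m
    induction m with
    | zero => intro W hW; exact hsub W hW
    | succ m ih =>
      intro W hW y hy
      obtain ⟨W', ⟨hW'U, a, haW', z, hz, hdaz⟩, hyW'⟩ := hy
      exact ⟨pick W', ⟨(hpickP W' hW'U).1, a, hsub W' hW'U haW', z, ih W hW hz, hdaz⟩,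
        hsub W' hW'U hyW'⟩

end Forward

section Backward
variable {X : Type*} [MetricSpace X]

lemma backward_decomp {F : Set (ℝ → ℝ)} (hF : NondecrFamily F) {n : ℕ} {r : ℝ} (hr : 0 < r)
    {𝒰 : Set (Set X)} (hcov : ∀ x : X, ∃ U ∈ 𝒰, x ∈ U)
    (hmult : RMultLE 𝒰 (((n:ℝ)+1)*r) (n+1)) :
    ∃ 𝒰dec : Fin (n+1) → Set (Set X), Decomp n r 𝒰dec ∧
      (FGrowing F 𝒰 → FGrowing F (⋃ i, 𝒰dec i)) ∧
      ∀ s : ℝ, ∀ m : ℕ,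
        FGrowing F (iterNbhd 𝒰 (s + ((n:ℝ)+1)*r) m '' 𝒰) →
        FGrowing F (iterNbhd (⋃ i, 𝒰dec i) s m '' (⋃ i, 𝒰dec i)) := by
  classical
  set R : ℝ := ((n:ℝ)+1)*r with hR
  set S : ℕ → X → Set (Set X) :=
    fun j x => {U | U ∈ 𝒰 ∧ (U ∩ closedBall x ((j:ℝ)*r)).Nonempty} with hS
  have hfinc : ∀ j ≤ n+1, ∀ x : X, (S j x).Finite ∧ (S j x).ncard ≤ n+1 := by
    intro j hj x
    have hball : ∀ t : Finset (Set X), ↑t ⊆ S j x → t.card ≤ n+1 := by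
      intro t ht
      refine hmult x t (fun U hU => (ht hU).1) ?_
      intro U hU
      obtain ⟨u, huU, hud⟩ := (ht hU).2
      refine ⟨u, huU, mem_closedBall.2 ?_⟩
      have h1 : dist u x ≤ (j:ℝ) * r := mem_closedBall.1 hud
      have h2 : (j:ℝ) ≤ (n:ℝ)+1 := by exact_mod_cast hj
      have : (j:ℝ) * r ≤ R := by rw [hR]; nlinarith
      linarith
    have hfin : (S j x).Finite := by
      by_contra h
      have hinf : (S j x).Infinite := h
      obtain ⟨t, ht, htc⟩ := hinf.exists_subset_card_eq (n+2)
      have := hball t ht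
      omega
    refine ⟨hfin, ?_⟩
    rw [Set.ncard_eq_toFinset_card _ hfin]
    exact hball _ (by simp)
  have hmono : ∀ j : ℕ, ∀ x : X, S j x ⊆ S (j+1) x := by
    intro j x U hU
    refine ⟨hU.1, ?_⟩
    obtain ⟨u, huU, hud⟩ := hU.2
    refine ⟨u, huU, mem_closedBall.2 ?_⟩
    have h1 : dist u x ≤ (j:ℝ) * r := mem_closedBall.1 hud
    have : ((j:ℕ)+1:ℝ) * r = (j:ℝ)*r + r := by push_cast; ring
    push_cast
    nlinarith
  have hne0 : ∀ x : X, (S 0 x).Nonempty := by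
    intro x
    obtain ⟨U, hU, hxU⟩ := hcov x
    exact ⟨U, hU, x, hxU, mem_closedBall.2 (by simp)⟩
  have hplateau : ∀ x : X, ∃ j, j ≤ n ∧ S j x = S (j+1) x := by
    intro x
    by_contra h
    push_neg at h
    have grow : ∀ j, j ≤ n+1 → j + 1 ≤ (S j x).ncard := by
      intro j
      induction j with
      | zero =>
        intro _
        have := (Set.ncard_pos ((hfinc 0 (by omega) x).1)).2 (hne0 x)
        omega
      | succ j ih =>
        intro hj
        have hjn : j ≤ n := by omega
        have hss : S j x ⊂ S (j+1) x := ssubset_of_subset_of_ne (hmono j x) (h j hjn)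
        have := Set.ncard_lt_ncard hss (hfinc (j+1) (by omega) x).1
        have := ih (by omega)
        omega
    have h1 := grow (n+1) (le_refl _)
    have h2 := (hfinc (n+1) (le_refl _) x).2
    omega
  set jx : X → ℕ := fun x => (hplateau x).choose with hjx
  have hj1 : ∀ x, jx x ≤ n := fun x => (hplateau x).choose_spec.1
  have hj2 : ∀ x, S (jx x) x = S (jx x + 1) x := fun x => (hplateau x).choose_spec.2
  have habs : ∀ x y : X, dist x y < r → S (jx y) x ⊆ S (jx y) y := by
    intro x y hxy U hU
    rw [hj2 y]
    refine ⟨hU.1, ?_⟩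
    obtain ⟨u, huU, hud⟩ := hU.2
    refine ⟨u, huU, mem_closedBall.2 ?_⟩
    have h1 : dist u x ≤ (jx y : ℝ) * r := mem_closedBall.1 hud
    have h2 : dist u y ≤ dist u x + dist x y := dist_triangle _ _ _
    push_cast
    nlinarith
  have heqS : ∀ x y : X, jx x = jx y → dist x y < r → S (jx x) x = S (jx x) y := by
    intro x y hjeq hxy
    refine le_antisymm ?_ ?_
    · have := habs x y hxy; rwa [← hjeq] at this
    · exact habs y x (by rwa [dist_comm])
  set 𝒰dec : Fin (n+1) → Set (Set X) := fun i =>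
    {P | ∃ x : X, jx x = (i:ℕ) ∧ P = {y | jx y = (i:ℕ) ∧ S (i:ℕ) y = S (i:ℕ) x}} with h𝒰dec
  set 𝒴 : Set (Set X) := ⋃ i, 𝒰dec i with h𝒴
  have hdec : Decomp n r 𝒰dec := by
    constructor
    · intro x
      refine ⟨⟨jx x, by have := hj1 x; omega⟩, {y | jx y = jx x ∧ S (jx x) y = S (jx x) x}, ⟨x, rfl, rfl⟩, rfl, rfl⟩
    · intro i U hU V hV hUV x hx y hy
      by_contra hlt
      push_neg at hlt
      obtain ⟨a, ha, hUeq⟩ := hU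
      obtain ⟨b, hb, hVeq⟩ := hV
      rw [hUeq] at hx
      rw [hVeq] at hy
      have h1 : S (jx x) x = S (jx x) y := heqS x y (by rw [hx.1, hy.1]) hlt
      rw [hx.1] at h1
      refine hUV ?_
      rw [hUeq, hVeq, ← hx.2, h1, hy.2]
  -- the finite families covering each piece
  have hsig : ∀ P ∈ 𝒴, ∃ σ : Finset (Set X), ↑σ ⊆ 𝒰 ∧ σ.card ≤ n+1 ∧
      (∀ y ∈ P, ∃ U ∈ σ, y ∈ U) ∧ (∀ U ∈ σ, ∀ x ∈ P, ∃ u ∈ U, dist u x ≤ R) := by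
    intro P hP
    obtain ⟨i, hi⟩ := mem_iUnion.1 hP
    obtain ⟨a, ha, hPeq⟩ := hi
    have hin : (i:ℕ) ≤ n+1 := by omega
    have hfin := (hfinc (i:ℕ) hin a).1
    refine ⟨hfin.toFinset, ?_, ?_, ?_, ?_⟩
    · intro U hU
      rw [Finset.mem_coe, Set.Finite.mem_toFinset] at hU
      exact hU.1
    · rw [← Set.ncard_eq_toFinset_card _ hfin]
      exact (hfinc (i:ℕ) hin a).2
    · intro y hy
      rw [hPeq] at hy
      obtain ⟨U, hU, hyU⟩ := hcov y
      have : U ∈ S (i:ℕ) y := ⟨hU, y, hyU, mem_closedBall.2 (by simp; positivity)⟩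
      rw [hy.2] at this
      exact ⟨U, hfin.mem_toFinset.2 this, hyU⟩
    · intro U hU x hx
      rw [hPeq] at hx
      rw [Set.Finite.mem_toFinset] at hU
      rw [← hx.2] at hU
      obtain ⟨u, huU, hud⟩ := hU.2
      refine ⟨u, huU, ?_⟩
      have h1 : dist u x ≤ (i:ℝ)*r := mem_closedBall.1 hud
      have h2 : (i:ℝ) ≤ (n:ℝ)+1 := by exact_mod_cast hin
      have : (i:ℝ) * r ≤ R := by rw [hR]; nlinarith
      linarith
  set sig : Set X → Finset (Set X) :=
    fun P => if h : P ∈ 𝒴 then (hsig P h).choose else ∅ with hsigdef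
  have hsigP : ∀ P (hP : P ∈ 𝒴), ↑(sig P) ⊆ 𝒰 ∧ (sig P).card ≤ n+1 ∧
      (∀ y ∈ P, ∃ U ∈ sig P, y ∈ U) ∧ (∀ U ∈ sig P, ∀ x ∈ P, ∃ u ∈ U, dist u x ≤ R) := by
    intro P hP
    simp only [hsigdef, dif_pos hP]
    exact (hsig P hP).choose_spec
  refine ⟨𝒰dec, hdec, ?_, ?_⟩
  · -- plain growth
    intro hg
    refine FGrowing.of_unions hF n hg ?_
    intro P hP
    obtain ⟨hsub, hcard, hcov', _⟩ := hsigP P hP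
    refine ⟨sig P, hsub, hcard, ?_⟩
    intro y hy
    obtain ⟨U, hU, hyU⟩ := hcov' y hy
    exact Set.mem_iUnion₂.2 ⟨U, hU, hyU⟩
  · -- iterated neighbourhood growth
    intro s m hgrow
    have hN : ∀ m : ℕ, ∀ P ∈ 𝒴, ∀ y ∈ iterNbhd 𝒴 s m P,
        ∃ U ∈ sig P, y ∈ iterNbhd 𝒰 (s + R) m U := by
      intro m
      induction m with
      | zero =>
        intro P hP y hy
        exact (hsigP P hP).2.2.1 y hy
      | succ m ih =>
        intro P hP y hy
        obtain ⟨P', ⟨hP'𝒴, xx, hxxP', z, hz, hdxz⟩, hyP'⟩ := hy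
        obtain ⟨U, hUσ, hzU⟩ := ih P hP z hz
        obtain ⟨Uy, hUyσ, hyUy⟩ := (hsigP P' hP'𝒴).2.2.1 y hyP'
        obtain ⟨u, huUy, hud⟩ := (hsigP P' hP'𝒴).2.2.2 Uy hUyσ xx hxxP'
        refine ⟨U, hUσ, ?_⟩
        refine ⟨Uy, ⟨(hsigP P' hP'𝒴).1 hUyσ, u, huUy, z, hzU, ?_⟩, hyUy⟩
        calc dist u z ≤ dist u xx + dist xx z := dist_triangle _ _ _
          _ ≤ R + s := by linarith
          _ = s + R := by ring
    refine FGrowing.of_unions hF n hgrow ?_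
    rintro V ⟨P, hP, rfl⟩
    refine ⟨(sig P).image (iterNbhd 𝒰 (s+R) m), ?_, ?_, ?_⟩
    · intro W hW
      simp only [Finset.coe_image, Set.mem_image, Finset.mem_coe] at hW
      obtain ⟨U, hU, rfl⟩ := hW
      exact ⟨U, (hsigP P hP).1 hU, rfl⟩
    · exact le_trans (Finset.card_image_le) (hsigP P hP).2.1
    · intro y hy
      obtain ⟨U, hU, hyU⟩ := hN m P hP y hy
      exact Set.mem_iUnion₂.2 ⟨_, Finset.mem_image_of_mem _ hU, hyU⟩

end Backward

/-- Cover formulations of `asdim_F` and `ov-asdim_F`. -/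
theorem asdim_cover_characterisation
    (F : Set (ℝ → ℝ)) (hF : NondecrFamily F)
    (X : Type*) [MetricSpace X] (hX : UnifDiscrete X) (n : ℕ) :
    (AsdimLE F X n ↔
      ∀ R : ℝ, 0 < R → ∃ 𝒰 : Set (Set X),
        (∀ x : X, ∃ U ∈ 𝒰, x ∈ U) ∧ RMultLE 𝒰 R (n + 1) ∧
        (∀ U ∈ 𝒰, RConn (2 * R) U) ∧ FGrowing F 𝒰) ∧
    (OvAsdimLE F X n ↔
      ∀ R : ℝ, 0 < R → ∃ 𝒰 : Set (Set X),
        (∀ x : X, ∃ U ∈ 𝒰, x ∈ U) ∧ RMultLE 𝒰 R (n + 1) ∧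
        (∀ U ∈ 𝒰, RConn (2 * R) U) ∧
        ∀ s : ℝ, 1 ≤ s → ∀ m : ℕ, FGrowing F ((iterNbhd 𝒰 s m) '' 𝒰)) := by
  constructor
  · constructor
    · -- asdim ⇒ covers
      intro h R hRpos
      obtain ⟨𝒰fam, hdec, hgrow⟩ := h (2*R+1) (by linarith)
      obtain ⟨𝒰, hcov, hmult, hconn, pick, hpick, hiter⟩ := forward_cover hRpos 𝒰fam hdec
      refine ⟨𝒰, hcov, hmult, hconn, ?_⟩
      refine FGrowing.of_unions hF 0 hgrow ?_
      intro W hW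
      refine ⟨{pick W}, ?_, by simp, ?_⟩
      · intro U hU
        rw [Finset.coe_singleton, Set.mem_singleton_iff] at hU
        rw [hU]
        exact (hpick W hW).1
      · simpa using (hpick W hW).2
    · -- covers ⇒ asdim
      intro h r hr
      have hRpos : (0:ℝ) < ((n:ℝ)+1)*r := by positivity
      obtain ⟨𝒰, hcov, hmult, hconn, hgrow⟩ := h (((n:ℝ)+1)*r) hRpos
      obtain ⟨𝒰dec, hdec, hgrow', _⟩ := backward_decomp hF hr hcov hmult
      exact ⟨𝒰dec, hdec, hgrow' hgrow⟩
  · constructor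
    · -- ov-asdim ⇒ covers
      intro h R hRpos
      obtain ⟨𝒰fam, hdec, hov⟩ := h (2*R+1) (by linarith)
      obtain ⟨𝒰, hcov, hmult, hconn, pick, hpick, hiter⟩ := forward_cover hRpos 𝒰fam hdec
      refine ⟨𝒰, hcov, hmult, hconn, ?_⟩
      intro s hs m
      refine FGrowing.of_unions hF 0 (hov s hs m) ?_
      rintro V ⟨W, hW, rfl⟩
      refine ⟨{iterNbhd (⋃ i, 𝒰fam i) s m (pick W)}, ?_, by simp, ?_⟩
      · intro U hU
        rw [Finset.coe_singleton, Set.mem_singleton_iff] at hU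
        rw [hU]
        exact ⟨pick W, (hpick W hW).1, rfl⟩
      · simpa using hiter s m W hW
    · -- covers ⇒ ov-asdim
      intro h r hr
      have hRpos : (0:ℝ) < ((n:ℝ)+1)*r := by positivity
      obtain ⟨𝒰, hcov, hmult, hconn, hov⟩ := h (((n:ℝ)+1)*r) hRpos
      obtain ⟨𝒰dec, hdec, _, hiter⟩ := backward_decomp hF hr hcov hmult
      refine ⟨𝒰dec, hdec, ?_⟩
      intro s hs m
      exact hiter s m (hov (s + ((n:ℝ)+1)*r) (by linarith) m)
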